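/- Let Γ be a torsion-free finitely generated nilpotent group of nilpotency class c, viewed as the integer points of a unipotent algebraic group with rational points Γ ⊗ ℚ (the rational Mal'cev completion). If Δ is the subgroup generated by all elements g of the Mal'cev completion with g^{p^k} ∈ Γ, then Δ^{p^{kc(c+1)/2}} ≤ Γ. -/

import Mathlib

open Subgroup
open scoped commutatorElement

universe u

section helpers

variable {G : Type u} [Group G]

private lemma rpl_comm_mul_left (a b c : G) : ⁅a * b, c⁆ = a * ⁅b, c⁆ * a⁻¹ * ⁅a, c⁆ := by
  simp only [commutatorElement_def]; group

private lemma rpl_comm_mul_right (a b c : G) : ⁅a, b * c⁆ = ⁅a, b⁆ * (b * ⁅a, c⁆ * b⁻¹) := by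
  simp only [commutatorElement_def]; group

private lemma rpl_comm_pow_left (x y : G) (h : Commute ⁅x, y⁆ x) (n : ℕ) :
    ⁅x ^ n, y⁆ = ⁅x, y⁆ ^ n := by
  induction n with
  | zero => simp
  | succ n ih =>
      rw [pow_succ', rpl_comm_mul_left, ih, (h.pow_left n).symm.eq, mul_inv_cancel_right,
        ← pow_succ]

private lemma rpl_comm_pow_right (x y : G) (h : Commute ⁅x, y⁆ y) (n : ℕ) :
    ⁅x, y ^ n⁆ = ⁅x, y⁆ ^ n := by
  induction n with
  | zero => simp
  | succ n ih =>
      rw [pow_succ', rpl_comm_mul_right, ih, (h.pow_left n).symm.eq, mul_inv_cancel_right,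
        ← pow_succ']

private lemma rpl_comm_central_left (h z w : G) (hz : ∀ g : G, Commute z g) :
    ⁅h * z, w⁆ = ⁅h, w⁆ := by
  rw [(hz h).symm.eq, rpl_comm_mul_left, commutatorElement_eq_one_iff_commute.mpr (hz w), mul_one,
    (hz ⁅h, w⁆).eq, mul_inv_cancel_right]

private lemma rpl_commutator_mem {H : Subgroup G} {a b : G} (ha : a ∈ H) (hb : b ∈ H) :
    ⁅a, b⁆ ∈ H := by
  rw [commutatorElement_def]
  exact mul_mem (mul_mem (mul_mem ha hb) (inv_mem ha)) (inv_mem hb)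

private lemma rpl_mem_lcs_succ {x y : G} {n : ℕ} (hx : x ∈ (⊤ : Subgroup G).lowerCentralSeries n) :
    ⁅x, y⁆ ∈ (⊤ : Subgroup G).lowerCentralSeries (n + 1) :=
  Subgroup.commutator_mem_commutator hx (mem_top y)

private lemma rpl_lcs_le_map {G' : Type u} [Group G'] (f : G →* G') (hf : Function.Surjective f)
    (n : ℕ) : (⊤ : Subgroup G').lowerCentralSeries n ≤ Subgroup.map f ((⊤ : Subgroup G).lowerCentralSeries n) := by
  induction n with
  | zero => simp [Subgroup.map_top_of_surjective f hf]
  | succ n ih =>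
      show ⁅(⊤ : Subgroup G').lowerCentralSeries n, ⊤⁆ ≤ _
      calc ⁅(⊤ : Subgroup G').lowerCentralSeries n, (⊤ : Subgroup G')⁆
          ≤ ⁅Subgroup.map f ((⊤ : Subgroup G).lowerCentralSeries n), Subgroup.map f ⊤⁆ :=
            Subgroup.commutator_mono ih (Subgroup.map_top_of_surjective f hf).ge
        _ = Subgroup.map f ⁅(⊤ : Subgroup G).lowerCentralSeries n, ⊤⁆ := (Subgroup.map_commutator _ _ f).symm

end helpers

open scoped Pointwise in
private lemma rpl_S (c : ℕ) : ∀ (G : Type u) (_ : Group G) (H : Subgroup G) (m : ℕ),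
    (⊤ : Subgroup G).lowerCentralSeries (c + 1) = ⊥ →
    Subgroup.closure {g : G | g ^ m ∈ H} = ⊤ →
    ∀ z ∈ (⊤ : Subgroup G).lowerCentralSeries c, z ^ m ^ (c + 1) ∈ H := by
  induction c with
  | zero =>
      intro G _ H m hb hT z hzc
      clear hzc
      have comm : ∀ a b : G, Commute a b := by
        intro a b
        rw [← commutatorElement_eq_one_iff_commute, ← Subgroup.mem_bot, ← hb]
        exact rpl_mem_lcs_succ (Subgroup.mem_top a)
      have hz : z ∈ Subgroup.closure {g : G | g ^ m ∈ H} := by rw [hT]; exact Subgroup.mem_top z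
      rw [pow_one]
      induction hz using Subgroup.closure_induction with
      | mem g hg => exact hg
      | one => simpa using H.one_mem
      | mul a b _ _ ha hb => rw [(comm a b).mul_pow]; exact H.mul_mem ha hb
      | inv a _ ha => rw [inv_pow]; exact H.inv_mem ha
  | succ c ih =>
      intro G _ H m hb hT z hz
      set N := (⊤ : Subgroup G).lowerCentralSeries (c + 1) with hN
      have central : ∀ w ∈ N, ∀ g : G, Commute w g := by
        intro w hw g
        rw [← commutatorElement_eq_one_iff_commute, ← Subgroup.mem_bot, ← hb]
        exact rpl_mem_lcs_succ hw
      haveI : N.Normal := Subgroup.lowerCentralSeries_normal ⊤ (c + 1)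
      set π := QuotientGroup.mk' N with hπ
      have hsurj : Function.Surjective π := QuotientGroup.mk'_surjective N
      have hb' : (⊤ : Subgroup (G ⧸ N)).lowerCentralSeries (c + 1) = ⊥ := by
        rw [eq_bot_iff]
        refine le_trans (rpl_lcs_le_map π hsurj (c + 1)) ?_
        rw [← hN, (Subgroup.map_eq_bot_iff _).mpr]
        rw [QuotientGroup.ker_mk']
      have hT' : Subgroup.closure {g : G ⧸ N | g ^ m ∈ Subgroup.map π H} = ⊤ := by
        rw [eq_top_iff, ← Subgroup.map_top_of_surjective π hsurj, ← hT, MonoidHom.map_closure]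
        refine Subgroup.closure_mono ?_
        rintro _ ⟨t, ht, rfl⟩
        show (π t) ^ m ∈ Subgroup.map π H
        rw [← map_pow]
        exact Subgroup.mem_map_of_mem π ht
      have key : ∀ x ∈ (⊤ : Subgroup G).lowerCentralSeries c, ∃ h ∈ H, ∃ w ∈ N, x ^ m ^ (c + 1) = h * w := by
        intro x hx
        have hmem : (π x) ^ m ^ (c + 1) ∈ Subgroup.map π H :=
          ih (G ⧸ N) _ (Subgroup.map π H) m hb' hT' (π x)
            (Subgroup.lowerCentralSeries.map π c (Subgroup.mem_map_of_mem π hx))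
        rw [← map_pow] at hmem
        have h3 : x ^ m ^ (c + 1) ∈ H ⊔ N := by
          have h2 : x ^ m ^ (c + 1) ∈ Subgroup.comap π (Subgroup.map π H) :=
            Subgroup.mem_comap.mpr hmem
          rwa [Subgroup.comap_map_eq, QuotientGroup.ker_mk'] at h2
        have h4 : x ^ m ^ (c + 1) ∈ (H : Set G) * (N : Set G) := by
          rw [← Subgroup.mul_normal]
          exact h3
        obtain ⟨h, hh, w, hw, heq⟩ := h4
        exact ⟨h, hh, w, hw, heq.symm⟩
      have hz' : z ∈ Subgroup.closure
          {x : G | ∃ p ∈ (⊤ : Subgroup G).lowerCentralSeries c, ∃ q ∈ (⊤ : Subgroup G), p * q * p⁻¹ * q⁻¹ = x} :=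
        hz
      clear hz
      have hNmem : ∀ {w : G}, w ∈ Subgroup.closure
          {x : G | ∃ p ∈ (⊤ : Subgroup G).lowerCentralSeries c, ∃ q ∈ (⊤ : Subgroup G), p * q * p⁻¹ * q⁻¹ = x} →
          w ∈ N := fun hw => hw
      have hcomm : ∀ a ∈ (⊤ : Subgroup G).lowerCentralSeries c, ∀ b g' : G, Commute ⁅a, b⁆ g' :=
        fun a ha b g' => central _ (rpl_mem_lcs_succ ha) g'
      induction hz' using Subgroup.closure_induction with
      | one => simpa using H.one_mem
      | mul a b ha' hb' iha ihb =>
          rw [(central a (hNmem ha') b).mul_pow]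
          exact H.mul_mem iha ihb
      | inv a ha' iha => rw [inv_pow]; exact H.inv_mem iha
      | mem g hg =>
          obtain ⟨x, hx, y, -, rfl⟩ := hg
          have hy : y ∈ Subgroup.closure {g : G | g ^ m ∈ H} := by
            rw [hT]; exact Subgroup.mem_top y
          show ⁅x, y⁆ ^ m ^ (c + 2) ∈ H
          induction hy using Subgroup.closure_induction with
          | one => simpa using H.one_mem
          | mul a b _ _ iha ihb =>
              have hab : ⁅x, a * b⁆ = ⁅x, a⁆ * ⁅x, b⁆ := by
                rw [rpl_comm_mul_right, (hcomm x hx b a).symm.eq, mul_inv_cancel_right]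
              rw [hab, (hcomm x hx a ⁅x, b⁆).mul_pow]
              exact H.mul_mem iha ihb
          | inv a _ iha =>
              have h2 : ⁅x, a⁆ * ⁅x, a⁻¹⁆ = 1 := by
                have h1 : ⁅x, a * a⁻¹⁆ = ⁅x, a⁆ * (a * ⁅x, a⁻¹⁆ * a⁻¹) := rpl_comm_mul_right _ _ _
                rw [(hcomm x hx a⁻¹ a).symm.eq, mul_inv_cancel_right] at h1
                simpa using h1.symm
              have h5 : ⁅x, a⁆⁻¹ = ⁅x, a⁻¹⁆ := inv_eq_of_mul_eq_one_right h2
              rw [← h5, inv_pow]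
              exact H.inv_mem iha
          | mem t ht =>
              have e1 : ⁅x, t⁆ ^ m ^ (c + 2) = ⁅x ^ m ^ (c + 1), t ^ m⁆ := by
                rw [show ((c : ℕ) + 2) = (c + 1) + 1 from rfl, pow_succ, pow_mul,
                  ← rpl_comm_pow_left x t (hcomm x hx t x) (m ^ (c + 1)),
                  ← rpl_comm_pow_right _ t
                    (hcomm _ (Subgroup.pow_mem _ hx _) t t) m]
              obtain ⟨h, hh, w, hw, heq⟩ := key x hx
              rw [e1, heq, rpl_comm_central_left h w (t ^ m) (fun g => central w hw g)]
              exact rpl_commutator_mem hh ht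

open scoped Pointwise in
private lemma rpl_main (c : ℕ) : ∀ (G : Type u) (_ : Group G) (H : Subgroup G) (m : ℕ),
    (⊤ : Subgroup G).lowerCentralSeries c = ⊥ →
    Subgroup.closure {g : G | g ^ m ∈ H} = ⊤ →
    ∀ d : G, d ^ m ^ (c * (c + 1) / 2) ∈ H := by
  induction c with
  | zero =>
      intro G _ H m hb hT d
      have : d ∈ (⊥ : Subgroup G) := by rw [← hb]; exact Subgroup.mem_top d
      rw [Subgroup.mem_bot] at this
      simpa [this] using H.one_mem
  | succ c ih =>
      intro G _ H m hb hT d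
      set N := (⊤ : Subgroup G).lowerCentralSeries c with hN
      have central : ∀ w ∈ N, ∀ g : G, Commute w g := by
        intro w hw g
        rw [← commutatorElement_eq_one_iff_commute, ← Subgroup.mem_bot, ← hb]
        exact rpl_mem_lcs_succ hw
      haveI : N.Normal := Subgroup.lowerCentralSeries_normal ⊤ c
      set π := QuotientGroup.mk' N with hπ
      have hsurj : Function.Surjective π := QuotientGroup.mk'_surjective N
      have hb' : (⊤ : Subgroup (G ⧸ N)).lowerCentralSeries c = ⊥ := by
        rw [eq_bot_iff]
        refine le_trans (rpl_lcs_le_map π hsurj c) ?_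
        rw [← hN, (Subgroup.map_eq_bot_iff _).mpr]
        rw [QuotientGroup.ker_mk']
      have hT' : Subgroup.closure {g : G ⧸ N | g ^ m ∈ Subgroup.map π H} = ⊤ := by
        rw [eq_top_iff, ← Subgroup.map_top_of_surjective π hsurj, ← hT, MonoidHom.map_closure]
        refine Subgroup.closure_mono ?_
        rintro _ ⟨t, ht, rfl⟩
        show (π t) ^ m ∈ Subgroup.map π H
        rw [← map_pow]
        exact Subgroup.mem_map_of_mem π ht
      have hmem : (π d) ^ m ^ (c * (c + 1) / 2) ∈ Subgroup.map π H :=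
        ih (G ⧸ N) _ (Subgroup.map π H) m hb' hT' (π d)
      rw [← map_pow] at hmem
      have h3 : d ^ m ^ (c * (c + 1) / 2) ∈ H ⊔ N := by
        have h2 : d ^ m ^ (c * (c + 1) / 2) ∈ Subgroup.comap π (Subgroup.map π H) :=
          Subgroup.mem_comap.mpr hmem
        rwa [Subgroup.comap_map_eq, QuotientGroup.ker_mk'] at h2
      have h4 : d ^ m ^ (c * (c + 1) / 2) ∈ (H : Set G) * (N : Set G) := by
        rw [← Subgroup.mul_normal]
        exact h3
      obtain ⟨h, hh, w, hw, heq⟩ := h4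
      have hexp : (c + 1) * (c + 1 + 1) / 2 = c * (c + 1) / 2 + (c + 1) := by
        have hmul : (c + 1) * (c + 1 + 1) = c * (c + 1) + 2 * (c + 1) := by ring
        rw [hmul, Nat.add_mul_div_left _ _ (by norm_num : (0:ℕ) < 2)]
      rw [hexp, pow_add, pow_mul, ← heq, (central w hw h).symm.mul_pow]
      exact H.mul_mem (H.pow_mem hh _) (rpl_S c G ‹Group G› H m hb hT w hw)

/-- Let `Γ` be a torsion-free finitely generated nilpotent group of class `c`,
embedded in its rational Mal'cev completion `Q` (a torsion-free divisible
nilpotent group of class `c` in which every element has a positive power lying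
in `Γ`). If `Δ` is the subgroup generated by all `g ∈ Q` with `g^{p^k} ∈ Γ`,
then `Δ^{p^{k c(c+1)/2}} ≤ Γ`. -/
theorem roots_pow_le (Q : Type*) [Group Q] [Group.IsNilpotent Q] (c p k : ℕ)
    (hp : p.Prime) (hclass : Group.nilpotencyClass Q = c)
    (Γ : Subgroup Q) (hfg : Γ.FG)
    (htf : ∀ q : Q, ∀ n : ℕ, 0 < n → q ^ n = 1 → q = 1)
    (hdiv : ∀ q : Q, ∀ n : ℕ, 0 < n → ∃ r : Q, r ^ n = q)
    (hroot : ∀ q : Q, ∃ n : ℕ, 0 < n ∧ q ^ n ∈ Γ) :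
    Subgroup.closure {x : Q | ∃ d ∈ Subgroup.closure {g : Q | g ^ p ^ k ∈ Γ},
        x = d ^ p ^ (k * (c * (c + 1) / 2))} ≤ Γ := by
  set m := p ^ k with hm
  set Δ := Subgroup.closure {g : Q | g ^ p ^ k ∈ Γ} with hΔ
  have hQc : (⊤ : Subgroup Q).lowerCentralSeries c = ⊥ := by
    rw [← hclass]; exact Subgroup.lowerCentralSeries_nilpotencyClass
  have hLc : (⊤ : Subgroup Δ).lowerCentralSeries c = ⊥ := by
    rw [eq_bot_iff]
    intro x hx
    have h1 : (x : Q) ∈ (⊤ : Subgroup Q).lowerCentralSeries c :=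
      Subgroup.lowerCentralSeries_map_subtype_le Δ c (Subgroup.mem_map_of_mem Δ.subtype hx)
    rw [hQc, Subgroup.mem_bot] at h1
    rw [Subgroup.mem_bot]
    exact Subtype.ext h1
  have hTop : Subgroup.closure {g : Δ | g ^ m ∈ Γ.subgroupOf Δ} = ⊤ := by
    rw [eq_top_iff]
    intro x _
    have hx : (x : Q) ∈ Subgroup.closure {g : Q | g ^ p ^ k ∈ Γ} := x.2
    have main : ∀ (g : Q) (hg : g ∈ Subgroup.closure {g : Q | g ^ p ^ k ∈ Γ}),
        (⟨g, hg⟩ : Δ) ∈ Subgroup.closure {g : Δ | g ^ m ∈ Γ.subgroupOf Δ} := by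
      intro g hg
      induction hg using Subgroup.closure_induction with
      | mem t ht =>
          refine Subgroup.subset_closure ?_
          show (⟨t, _⟩ : Δ) ^ m ∈ Γ.subgroupOf Δ
          rw [Subgroup.mem_subgroupOf]
          show (((⟨t, _⟩ : Δ) ^ m : Δ) : Q) ∈ Γ
          rw [SubmonoidClass.coe_pow]
          exact ht
      | one => exact Subgroup.one_mem _
      | mul a b ha hb iha ihb => exact Subgroup.mul_mem _ iha ihb
      | inv a ha iha => exact Subgroup.inv_mem _ iha
    exact main (x : Q) x.2
  intro x hx
  refine Subgroup.closure_le Γ |>.mpr ?_ hx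
  rintro _ ⟨d, hd, rfl⟩
  have h := rpl_main c Δ inferInstance (Γ.subgroupOf Δ) m hLc hTop ⟨d, hd⟩
  rw [Subgroup.mem_subgroupOf, SubmonoidClass.coe_pow] at h
  show d ^ p ^ (k * (c * (c + 1) / 2)) ∈ Γ
  rw [pow_mul p k]
  exact h
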